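/- Let n ≥ 1, a : Fin n → ℝ and b ∈ ℝ with a i > 0 for all i and b > 0. Let λ, μ ∈ ℝ satisfy -b < λ < a i for all i, -b < μ < a i for all i, and μ ≠ 0. Define f_λ on ℝ^{n+1} by multiplying x_i by Real.sqrt ((a i - λ)/(a i)) for i ≥ 1 and x₀ by Real.sqrt ((b + λ)/b). If x ∈ ℝ^{n+1} satisfies q(x) = ∑_{i=1}^n (x i)^2/a i - (x 0)^2/b = 0 and q_μ(x) = ∑_{i=1}^n (x i)^2/(a i - μ) - (x 0)^2/(b + μ) = 0, then q_μ(f_λ x) = 0. (Points x ∈ E and f_λ(x) ∈ E_λ lie on the same spherical quadrics confocal to E; this rests on the linear relation (λ/μ) q + (1 - λ/μ) q_μ = q_μ ∘ f_λ.) -/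
import Mathlib


/-- The points `x ∈ E` and `f_λ(x) ∈ E_λ` lie on the same spherical quadrics confocal to the
spherical ellipsoid `E`: if `q(x) = 0` and `q_μ(x) = 0`, then `q_μ(f_λ x) = 0`. -/
theorem sphere_confocal_map_same_quadrics (n : ℕ) (hn : 1 ≤ n) (a : Fin n → ℝ) (b : ℝ)
    (ha : ∀ i, 0 < a i) (hb : 0 < b)
    (lam mu : ℝ) (hlam₁ : -b < lam) (hlam₂ : ∀ i, lam < a i)
    (hmu₁ : -b < mu) (hmu₂ : ∀ i, mu < a i) (hmu0 : mu ≠ 0)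
    (f : (Fin (n + 1) → ℝ) →ₗ[ℝ] (Fin (n + 1) → ℝ))
    (hf0 : ∀ x : Fin (n + 1) → ℝ, f x 0 = Real.sqrt ((b + lam) / b) * x 0)
    (hfi : ∀ (x : Fin (n + 1) → ℝ) (i : Fin n),
      f x i.succ = Real.sqrt ((a i - lam) / a i) * x i.succ)
    (x : Fin (n + 1) → ℝ)
    (hq : ∑ i : Fin n, (x i.succ) ^ 2 / a i - (x 0) ^ 2 / b = 0)
    (hqmu : ∑ i : Fin n, (x i.succ) ^ 2 / (a i - mu) - (x 0) ^ 2 / (b + mu) = 0) :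
    ∑ i : Fin n, (f x i.succ) ^ 2 / (a i - mu) - (f x 0) ^ 2 / (b + mu) = 0 := by
  have hS : ∀ i : Fin n, (f x i.succ) ^ 2 / (a i - mu)
      = lam / mu * ((x i.succ) ^ 2 / a i) + (1 - lam / mu) * ((x i.succ) ^ 2 / (a i - mu)) := by
    intro i
    have h1 : a i ≠ 0 := (ha i).ne'
    have h2 : a i - mu ≠ 0 := (sub_pos.2 (hmu₂ i)).ne'
    rw [hfi, mul_pow, Real.sq_sqrt (div_nonneg (sub_pos.2 (hlam₂ i)).le (ha i).le)]
    field_simp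
    ring
  have h0 : (f x 0) ^ 2 / (b + mu)
      = lam / mu * ((x 0) ^ 2 / b) + (1 - lam / mu) * ((x 0) ^ 2 / (b + mu)) := by
    have h1 : b ≠ 0 := hb.ne'
    have h2 : b + mu ≠ 0 := by linarith
    rw [hf0, mul_pow, Real.sq_sqrt (div_nonneg (by linarith) hb.le)]
    field_simp
    ring
  rw [Finset.sum_congr rfl fun i _ => hS i, h0, Finset.sum_add_distrib,
    ← Finset.mul_sum, ← Finset.mul_sum]
  linear_combination (lam / mu) * hq + (1 - lam / mu) * hqmu
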